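/- Let Y = f(P) + ε where P = p(X, W), f is measurable, and ε is integrable and independent of (X, W). If E[Y | X, W] is almost surely equal to E[Y | W] (i.e., the conditional mean does not depend on X), then the conditional distribution of Y given (X, W) equals the conditional distribution of Y given W almost surely; i.e., for every measurable set A, P(Y ∈ A | X, W) = P(Y ∈ A | W) a.s. -/

import Mathlib

open MeasureTheory ProbabilityTheory

/-- Freezing lemma: if `V` and `ε` are independent, then
`P(g(V) + ε ∈ A | σ(V))(ω) = ν({e | g(V ω) + e ∈ A})` a.s., where `ν` is the law of `ε`. -/
lemma freeze_aux {Ω γ : Type*} {m0 : MeasurableSpace Ω} [MeasurableSpace γ]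
    (μ : Measure Ω) [IsProbabilityMeasure μ]
    (V : Ω → γ) (hV : Measurable V) (g : γ → ℝ) (hg : Measurable g)
    (ε : Ω → ℝ) (hε : Measurable ε)
    (hindep : IndepFun V ε μ)
    (A : Set ℝ) (hA : MeasurableSet A) :
    (μ⟦(fun ω => g (V ω) + ε ω) ⁻¹' A | MeasurableSpace.comap V inferInstance⟧)
      =ᵐ[μ] fun ω =>
        (Measure.map ε μ (Prod.mk (g (V ω)) ⁻¹' {q : ℝ × ℝ | q.1 + q.2 ∈ A})).toReal := by
  set ν : Measure ℝ := Measure.map ε μ with hν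
  have hνprob : IsProbabilityMeasure ν := Measure.isProbabilityMeasure_map hε.aemeasurable
  have hsAm : MeasurableSet {q : ℝ × ℝ | q.1 + q.2 ∈ A} :=
    (measurable_fst.add measurable_snd) hA
  have hFt : Measurable fun t : ℝ => ν (Prod.mk t ⁻¹' {q : ℝ × ℝ | q.1 + q.2 ∈ A}) :=
    measurable_measure_prodMk_left hsAm
  have hFm : Measurable fun t : ℝ =>
      (ν (Prod.mk t ⁻¹' {q : ℝ × ℝ | q.1 + q.2 ∈ A})).toReal := hFt.ennreal_toReal
  have hm₂ : MeasurableSpace.comap V inferInstance ≤ m0 := hV.comap_le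
  have hVm₂ : Measurable[MeasurableSpace.comap V inferInstance] V := comap_measurable V
  have hGm₂ : Measurable[MeasurableSpace.comap V inferInstance] fun ω => g (V ω) :=
    hg.comp hVm₂
  have hFGm₂ : Measurable[MeasurableSpace.comap V inferInstance] fun ω =>
      (ν (Prod.mk (g (V ω)) ⁻¹' {q : ℝ × ℝ | q.1 + q.2 ∈ A})).toReal := hFm.comp hGm₂
  have hFGm0 : Measurable fun ω =>
      (ν (Prod.mk (g (V ω)) ⁻¹' {q : ℝ × ℝ | q.1 + q.2 ∈ A})).toReal :=
    hFm.comp (hg.comp hV)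
  have hFGbd : ∀ ω, ‖(ν (Prod.mk (g (V ω)) ⁻¹' {q : ℝ × ℝ | q.1 + q.2 ∈ A})).toReal‖ ≤ 1 := by
    intro ω
    rw [Real.norm_eq_abs, abs_of_nonneg ENNReal.toReal_nonneg]
    have h1 := ENNReal.toReal_mono (by simp) (prob_le_one
      (μ := ν) (s := Prod.mk (g (V ω)) ⁻¹' {q : ℝ × ℝ | q.1 + q.2 ∈ A}))
    simpa using h1
  have hFGint : Integrable (fun ω =>
      (ν (Prod.mk (g (V ω)) ⁻¹' {q : ℝ × ℝ | q.1 + q.2 ∈ A})).toReal) μ :=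
    Integrable.mono' (integrable_const 1) hFGm0.aestronglyMeasurable
      (Filter.Eventually.of_forall hFGbd)
  have hYm : Measurable fun ω => g (V ω) + ε ω := (hg.comp hV).add hε
  have hindint :
      Integrable (((fun ω => g (V ω) + ε ω) ⁻¹' A).indicator fun _ => (1 : ℝ)) μ :=
    (integrable_const 1).indicator (hYm hA)
  have hmap : μ.map (fun ω => (V ω, ε ω)) = (μ.map V).prod ν :=
    (indepFun_iff_map_prod_eq_prod_map_map hV.aemeasurable hε.aemeasurable).mp hindep
  refine (ae_eq_condExp_of_forall_setIntegral_eq hm₂ hindint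
    (fun s _ _ => hFGint.integrableOn) (fun s hs _ => ?_)
    (hFGm₂.aestronglyMeasurable)).symm
  obtain ⟨B, hB, rfl⟩ := hs
  have hC : MeasurableSet {q : γ × ℝ | q.1 ∈ B ∧ g q.1 + q.2 ∈ A} :=
    (hB.preimage measurable_fst).inter (((hg.comp measurable_fst).add measurable_snd) hA)
  have hpre : V ⁻¹' B ∩ (fun ω => g (V ω) + ε ω) ⁻¹' A
      = (fun ω => (V ω, ε ω)) ⁻¹' {q : γ × ℝ | q.1 ∈ B ∧ g q.1 + q.2 ∈ A} := rfl
  have hmeasC : μ (V ⁻¹' B ∩ (fun ω => g (V ω) + ε ω) ⁻¹' A)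
      = ∫⁻ v in B, ν (Prod.mk (g v) ⁻¹' {q : ℝ × ℝ | q.1 + q.2 ∈ A}) ∂(μ.map V) := by
    rw [hpre, ← Measure.map_apply (hV.prodMk hε) hC, hmap, Measure.prod_apply hC,
      ← lintegral_indicator hB]
    congr 1
    funext v
    by_cases hv : v ∈ B
    · rw [Set.indicator_of_mem hv]
      congr 1
      ext e
      simp [hv]
    · rw [Set.indicator_of_notMem hv]
      have hempty : Prod.mk v ⁻¹' {q : γ × ℝ | q.1 ∈ B ∧ g q.1 + q.2 ∈ A} = ∅ := by
        ext e; simp [hv]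
      simp [hempty]
  have hRHS : ∫ x in V ⁻¹' B, ((fun ω => g (V ω) + ε ω) ⁻¹' A).indicator
        (fun _ => (1 : ℝ)) x ∂μ
      = (μ (V ⁻¹' B ∩ (fun ω => g (V ω) + ε ω) ⁻¹' A)).toReal := by
    rw [setIntegral_indicator (hYm hA), setIntegral_const, smul_eq_mul, mul_one, measureReal_def]
  have hLHS : ∫ x in V ⁻¹' B,
        (ν (Prod.mk (g (V x)) ⁻¹' {q : ℝ × ℝ | q.1 + q.2 ∈ A})).toReal ∂μ
      = (∫⁻ v in B, ν (Prod.mk (g v) ⁻¹' {q : ℝ × ℝ | q.1 + q.2 ∈ A}) ∂(μ.map V)).toReal := by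
    have h1 : ∫ v in B, (ν (Prod.mk (g v) ⁻¹' {q : ℝ × ℝ | q.1 + q.2 ∈ A})).toReal ∂(μ.map V)
        = ∫ x in V ⁻¹' B,
            (ν (Prod.mk (g (V x)) ⁻¹' {q : ℝ × ℝ | q.1 + q.2 ∈ A})).toReal ∂μ :=
      setIntegral_map hB (hFm.comp hg).aestronglyMeasurable hV.aemeasurable
    rw [← h1]
    exact integral_toReal ((hFt.comp hg).aemeasurable.restrict)
      (Filter.Eventually.of_forall fun v => measure_lt_top ν _)
  rw [hLHS, hRHS, hmeasC]

/-- In the additive noise model `Y = f(p(X,W)) + ε` with `ε` independent of `(X,W)`,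
if `E[Y | X, W] = E[Y | W]` a.s., then for every measurable set `A`,
`P(Y ∈ A | X, W) = P(Y ∈ A | W)` a.s. -/
theorem anm_mean_indep_implies_distributional_indep
    {Ω α β : Type*} {m0 : MeasurableSpace Ω} [MeasurableSpace α] [MeasurableSpace β]
    (μ : Measure Ω) [IsProbabilityMeasure μ]
    (X : Ω → α) (W : Ω → β) (hX : Measurable X) (hW : Measurable W)
    (p : α × β → ℝ) (hp : Measurable p) (f : ℝ → ℝ) (hf : Measurable f)
    (ε : Ω → ℝ) (hε : Measurable ε) (hεint : Integrable ε μ)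
    (hindep : IndepFun (fun ω => (X ω, W ω)) ε μ)
    (Y : Ω → ℝ) (hY : Y = fun ω => f (p (X ω, W ω)) + ε ω)
    (hfint : Integrable (fun ω => f (p (X ω, W ω))) μ)
    (hmean :
      μ[Y | MeasurableSpace.comap (fun ω => (X ω, W ω)) inferInstance]
        =ᵐ[μ] μ[Y | MeasurableSpace.comap W inferInstance]) :
    ∀ A : Set ℝ, MeasurableSet A →
      (μ⟦Y ⁻¹' A | MeasurableSpace.comap (fun ω => (X ω, W ω)) inferInstance⟧)
        =ᵐ[μ] μ⟦Y ⁻¹' A | MeasurableSpace.comap W inferInstance⟧ := by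
  subst hY
  intro A hA
  have hV : Measurable fun ω => (X ω, W ω) := hX.prodMk hW
  have hm₂ : MeasurableSpace.comap (fun ω => (X ω, W ω)) inferInstance ≤ m0 := hV.comap_le
  have hm₁ : MeasurableSpace.comap W inferInstance ≤ m0 := hW.comap_le
  have hle : MeasurableSpace.comap W inferInstance
      ≤ MeasurableSpace.comap (fun ω => (X ω, W ω)) inferInstance := by
    have h1 : (MeasurableSpace.comap W inferInstance : MeasurableSpace Ω)
        = MeasurableSpace.comap (fun ω => (X ω, W ω))
            (MeasurableSpace.comap (Prod.snd : α × β → β) inferInstance) :=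
      (MeasurableSpace.comap_comp (f := (Prod.snd : α × β → β))
        (g := fun ω => (X ω, W ω))).symm
    exact le_trans (le_of_eq h1) (MeasurableSpace.comap_mono measurable_snd.comap_le)
  -- laws of ε
  set ν : Measure ℝ := Measure.map ε μ with hν
  -- the conditional mean hypothesis gives `f (p (X, W)) = E[f (p (X, W)) | W]` a.s.
  have hεsm : StronglyMeasurable[MeasurableSpace.comap ε inferInstance] ε :=
    (comap_measurable ε).stronglyMeasurable
  have hind2 : Indep (MeasurableSpace.comap ε inferInstance)
      (MeasurableSpace.comap (fun ω => (X ω, W ω)) inferInstance) μ :=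
    (IndepFun_iff_Indep ε (fun ω => (X ω, W ω)) μ).mp hindep.symm
  have hindW : IndepFun ε W μ := by
    have h := hindep.symm.comp (measurable_id : Measurable (id : ℝ → ℝ)) measurable_snd
    exact h
  have hind1 : Indep (MeasurableSpace.comap ε inferInstance)
      (MeasurableSpace.comap W inferInstance) μ :=
    (IndepFun_iff_Indep ε W μ).mp hindW
  have hc2 : μ[ε | MeasurableSpace.comap (fun ω => (X ω, W ω)) inferInstance]
      =ᵐ[μ] fun _ => ∫ x, ε x ∂μ := condExp_indep_eq hε.comap_le hm₂ hεsm hind2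
  have hc1 : μ[ε | MeasurableSpace.comap W inferInstance]
      =ᵐ[μ] fun _ => ∫ x, ε x ∂μ := condExp_indep_eq hε.comap_le hm₁ hεsm hind1
  have hGsm₂ : StronglyMeasurable[MeasurableSpace.comap (fun ω => (X ω, W ω)) inferInstance]
      fun ω => f (p (X ω, W ω)) :=
    ((hf.comp hp).comp (comap_measurable fun ω => (X ω, W ω))).stronglyMeasurable
  have hG2 : μ[(fun ω => f (p (X ω, W ω)))
        | MeasurableSpace.comap (fun ω => (X ω, W ω)) inferInstance]
      = fun ω => f (p (X ω, W ω)) :=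
    condExp_of_stronglyMeasurable hm₂ hGsm₂ hfint
  have hA2 : μ[(fun ω => f (p (X ω, W ω)) + ε ω)
        | MeasurableSpace.comap (fun ω => (X ω, W ω)) inferInstance]
      =ᵐ[μ] fun ω => f (p (X ω, W ω)) + ∫ x, ε x ∂μ := by
    have hadd : μ[(fun ω => f (p (X ω, W ω))) + ε
          | MeasurableSpace.comap (fun ω => (X ω, W ω)) inferInstance]
        =ᵐ[μ] μ[(fun ω => f (p (X ω, W ω)))
            | MeasurableSpace.comap (fun ω => (X ω, W ω)) inferInstance]
          + μ[ε | MeasurableSpace.comap (fun ω => (X ω, W ω)) inferInstance] :=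
      condExp_add hfint hεint _
    refine hadd.trans ?_
    rw [hG2]
    filter_upwards [hc2] with ω hω
    simp only [Pi.add_apply, hω]
  have hA1 : μ[(fun ω => f (p (X ω, W ω)) + ε ω) | MeasurableSpace.comap W inferInstance]
      =ᵐ[μ] fun ω =>
        (μ[(fun ω => f (p (X ω, W ω))) | MeasurableSpace.comap W inferInstance]) ω
          + ∫ x, ε x ∂μ := by
    have hadd : μ[(fun ω => f (p (X ω, W ω))) + ε | MeasurableSpace.comap W inferInstance]
        =ᵐ[μ] μ[(fun ω => f (p (X ω, W ω))) | MeasurableSpace.comap W inferInstance]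
          + μ[ε | MeasurableSpace.comap W inferInstance] :=
      condExp_add hfint hεint _
    refine hadd.trans ?_
    filter_upwards [hc1] with ω hω
    simp only [Pi.add_apply, hω]
  have hGae : (fun ω => f (p (X ω, W ω)))
      =ᵐ[μ] μ[(fun ω => f (p (X ω, W ω))) | MeasurableSpace.comap W inferInstance] := by
    have key : (fun ω => f (p (X ω, W ω)) + ∫ x, ε x ∂μ)
        =ᵐ[μ] fun ω =>
          (μ[(fun ω => f (p (X ω, W ω))) | MeasurableSpace.comap W inferInstance]) ω
            + ∫ x, ε x ∂μ := hA2.symm.trans (hmean.trans hA1)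
    filter_upwards [key] with ω h
    exact add_right_cancel h
  -- freezing lemma
  have hfreeze := freeze_aux μ (fun ω => (X ω, W ω)) hV (fun v => f (p v)) (hf.comp hp)
    ε hε hindep A hA
  -- the candidate common version, measurable w.r.t. σ(W)
  set H : Ω → ℝ := μ[(fun ω => f (p (X ω, W ω))) | MeasurableSpace.comap W inferInstance]
    with hH
  have hsAm : MeasurableSet {q : ℝ × ℝ | q.1 + q.2 ∈ A} :=
    (measurable_fst.add measurable_snd) hA
  have hFt : Measurable fun t : ℝ => ν (Prod.mk t ⁻¹' {q : ℝ × ℝ | q.1 + q.2 ∈ A}) :=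
    measurable_measure_prodMk_left hsAm
  have hFm : Measurable fun t : ℝ =>
      (ν (Prod.mk t ⁻¹' {q : ℝ × ℝ | q.1 + q.2 ∈ A})).toReal := hFt.ennreal_toReal
  have hνprob : IsProbabilityMeasure ν := Measure.isProbabilityMeasure_map hε.aemeasurable
  have hHsm : StronglyMeasurable[MeasurableSpace.comap W inferInstance] H :=
    stronglyMeasurable_condExp
  have hFHsm : StronglyMeasurable[MeasurableSpace.comap W inferInstance] fun ω =>
      (ν (Prod.mk (H ω) ⁻¹' {q : ℝ × ℝ | q.1 + q.2 ∈ A})).toReal :=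
    (hFm.comp hHsm.measurable).stronglyMeasurable
  have hFHint : Integrable (fun ω =>
      (ν (Prod.mk (H ω) ⁻¹' {q : ℝ × ℝ | q.1 + q.2 ∈ A})).toReal) μ := by
    refine Integrable.mono' (integrable_const 1)
      ((hFm.comp (hHsm.measurable.mono hm₁ le_rfl)).aestronglyMeasurable)
      (Filter.Eventually.of_forall fun ω => ?_)
    rw [Real.norm_eq_abs, abs_of_nonneg ENNReal.toReal_nonneg]
    have h1 := ENNReal.toReal_mono (by simp) (prob_le_one
      (μ := ν) (s := Prod.mk (H ω) ⁻¹' {q : ℝ × ℝ | q.1 + q.2 ∈ A}))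
    simpa using h1
  have hFGFH : (fun ω =>
        (ν (Prod.mk (f (p (X ω, W ω))) ⁻¹' {q : ℝ × ℝ | q.1 + q.2 ∈ A})).toReal)
      =ᵐ[μ] fun ω => (ν (Prod.mk (H ω) ⁻¹' {q : ℝ × ℝ | q.1 + q.2 ∈ A})).toReal := by
    filter_upwards [hGae] with ω h
    rw [h]
  -- m₂ side
  have side2 : (μ⟦(fun ω => f (p (X ω, W ω)) + ε ω) ⁻¹' A
        | MeasurableSpace.comap (fun ω => (X ω, W ω)) inferInstance⟧)
      =ᵐ[μ] fun ω => (ν (Prod.mk (H ω) ⁻¹' {q : ℝ × ℝ | q.1 + q.2 ∈ A})).toReal :=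
    hfreeze.trans hFGFH
  -- m₁ side, via the tower property
  have side1 : (μ⟦(fun ω => f (p (X ω, W ω)) + ε ω) ⁻¹' A
        | MeasurableSpace.comap W inferInstance⟧)
      =ᵐ[μ] fun ω => (ν (Prod.mk (H ω) ⁻¹' {q : ℝ × ℝ | q.1 + q.2 ∈ A})).toReal := by
    have tower := condExp_condExp_of_le
      (f := ((fun ω => f (p (X ω, W ω)) + ε ω) ⁻¹' A).indicator fun _ => (1 : ℝ))
      (μ := μ) hle hm₂
    refine tower.symm.trans ?_
    have h1 := condExp_congr_ae (m := MeasurableSpace.comap W inferInstance) (μ := μ)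
      side2
    refine h1.trans ?_
    rw [condExp_of_stronglyMeasurable hm₁ hFHsm hFHint]
  exact side2.trans side1.symm
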